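/- Let λ and μ be partitions and set n(μ′) = Σ_{(i,j)∈μ} A_μ(i,j) (the sum of arm lengths of cells of μ). Then the function q ↦ q^{n(μ′)} · N_{λμ}((q/t) Q; q, t) is a polynomial in q (with coefficients rational functions of t and Q), and its value at q = 0 equals Ñ_{λμ}(Q) := (−Q t^{−1})^{|μ̌|} · t^{−Σ_{(i,j)∈μ̌} L_λ(i,j)} · ∏_{(i,j)∈μ∖μ̌} (1 − Q t^{−L_λ(i,j)−1}), where μ̌ = {(i,j) cell of μ : A_μ(i,j) > 0} and |μ̌| is its cardinality. -/

import Mathlib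

open Finset

/-- `i`-th part (1-indexed) of a partition given as a list of parts; `0` beyond the length. -/
def partAt (L : List ℕ) (i : ℕ) : ℕ := L.getD (i - 1) 0

/-- `j`-th part (1-indexed) of the conjugate partition: `#{i : λ_i ≥ j}`. -/
def conjAt (L : List ℕ) (j : ℕ) : ℕ := (L.filter (fun x => j ≤ x)).length

/-- Arm length `A_λ(i,j) = λ_i − j` (cells are 1-indexed; may be negative). -/
def armA (L : List ℕ) (i j : ℕ) : ℤ := (partAt L i : ℤ) - (j : ℤ)

/-- Leg length `L_λ(i,j) = λ′_j − i` (cells are 1-indexed; may be negative). -/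
def legA (L : List ℕ) (i j : ℕ) : ℤ := (conjAt L j : ℤ) - (i : ℤ)

/-- The 5D Nekrasov factor `N_{λμ}(Q; q, t)`. -/
noncomputable def nekrasov (q t Q : ℂ) (lam mu : List ℕ) : ℂ :=
  (∏ i ∈ Finset.Icc 1 lam.length, ∏ j ∈ Finset.Icc 1 (partAt lam i),
      (1 - Q * q ^ armA lam i j * t ^ (legA mu i j + 1))) *
    ∏ i ∈ Finset.Icc 1 mu.length, ∏ j ∈ Finset.Icc 1 (partAt mu i),
      (1 - Q * q ^ (-armA mu i j - 1) * t ^ (-legA lam i j))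

/-- `n(μ′) = Σ_{(i,j)∈μ} A_μ(i,j)`, the sum of the arm lengths of the cells of `μ`. -/
def armSum (mu : List ℕ) : ℕ :=
  ∑ i ∈ Finset.Icc 1 mu.length, ∑ j ∈ Finset.Icc 1 (partAt mu i), (partAt mu i - j)

/-- `|μ̌|`, the number of cells of `μ` with positive arm length,
i.e. `Σ_i (μ_i − 1)`. -/
def checkCard (mu : List ℕ) : ℕ := ∑ i ∈ Finset.Icc 1 mu.length, (partAt mu i - 1)

/-- `Σ_{(i,j)∈μ̌} L_λ(i,j)`, the sum of the leg lengths (w.r.t. `λ`) over the cells of `μ`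
with positive arm length, i.e. over cells `(i,j)` of `μ` with `j ≤ μ_i − 1`. -/
def legSumCheck (lam mu : List ℕ) : ℤ :=
  ∑ i ∈ Finset.Icc 1 mu.length, ∑ j ∈ Finset.Icc 1 (partAt mu i - 1), legA lam i j

/-- The crystallized Nekrasov factor
`Ñ_{λμ}(Q) = (−Q t^{−1})^{|μ̌|} t^{−Σ_{(i,j)∈μ̌} L_λ(i,j)} ∏_{(i,j)∈μ∖μ̌} (1 − Q t^{−L_λ(i,j)−1})`;
the cells of `μ ∖ μ̌` are exactly the cells `(i, μ_i)` for `1 ≤ i ≤ ℓ(μ)`. -/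
noncomputable def tildeNek (t Q : ℂ) (lam mu : List ℕ) : ℂ :=
  (-Q * t⁻¹) ^ checkCard mu * t ^ (-legSumCheck lam mu) *
    ∏ i ∈ Finset.Icc 1 mu.length, (1 - Q * t ^ (-legA lam i (partAt mu i) - 1))

/- ------------------ auxiliary lemmas ------------------- -/

lemma zpow_sum₀ {α : Type*} {t : ℂ} (ht : t ≠ 0) (s : Finset α) (f : α → ℤ) :
    t ^ (∑ i ∈ s, f i) = ∏ i ∈ s, t ^ f i := by
  induction s using Finset.cons_induction with
  | empty => simp
  | cons a s ha ih => simp [Finset.sum_cons, Finset.prod_cons, zpow_add₀ ht, ih]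

lemma lam_fac (q t Q : ℂ) (ht : t ≠ 0) (a : ℕ) (L : ℤ) :
    1 - q / t * Q * q ^ ((a : ℤ)) * t ^ (L + 1) = 1 - Q * t ^ L * q ^ (a + 1) := by
  rw [zpow_add₀ ht, zpow_natCast, zpow_one]
  field_simp
  ring

lemma mu_fac (q t Q : ℂ) (hq : q ≠ 0) (ht : t ≠ 0) (a : ℕ) (L : ℤ) :
    q ^ a * (1 - q / t * Q * q ^ (-(a : ℤ) - 1) * t ^ (-L)) = q ^ a - Q * t ^ (-L - 1) := by
  have hs : t ^ L ≠ 0 := zpow_ne_zero _ ht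
  rw [show -(a:ℤ) - 1 = -(((a+1:ℕ)):ℤ) by push_cast; ring,
      zpow_neg, zpow_natCast,
      show -L - 1 = -L + (-1) by ring, zpow_add₀ ht, zpow_neg_one, zpow_neg]
  field_simp
  ring

lemma prod_split {M : Type*} [CommMonoid M] (m : ℕ) (hm : 1 ≤ m) (f : ℕ → M) :
    ∏ j ∈ Icc 1 m, f j = (∏ j ∈ Icc 1 (m - 1), f j) * f m := by
  conv_lhs => rw [show m = (m - 1) + 1 by omega]
  rw [Finset.prod_Icc_succ_top (by omega), show m - 1 + 1 = m by omega]


/-- For partitions `λ, μ`, the function `q ↦ q^{n(μ′)} · N_{λμ}((q/t)Q; q, t)` is a polynomial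
in `q`, and its value at `q = 0` equals the crystallized Nekrasov factor `Ñ_{λμ}(Q)`. -/
theorem nekrasov_crystal_limit (t Q : ℂ) (ht : t ≠ 0) (lam mu : List ℕ)
    (hl1 : lam.Pairwise (· ≥ ·)) (hl2 : ∀ x ∈ lam, 0 < x)
    (hm1 : mu.Pairwise (· ≥ ·)) (hm2 : ∀ x ∈ mu, 0 < x) :
    ∃ P : Polynomial ℂ,
      (∀ q : ℂ, q ≠ 0 → P.eval q = q ^ armSum mu * nekrasov q t (q / t * Q) lam mu) ∧
      P.eval 0 = tildeNek t Q lam mu := by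
  have hpos : ∀ i ∈ Icc 1 mu.length, 0 < partAt mu i := by
    intro i hi
    simp only [mem_Icc] at hi
    have h : i - 1 < mu.length := by omega
    unfold partAt
    rw [List.getD_eq_getElem mu 0 h]
    exact hm2 _ (List.getElem_mem h)
  refine ⟨(∏ i ∈ Icc 1 lam.length, ∏ j ∈ Icc 1 (partAt lam i),
      (1 - Polynomial.C (Q * t ^ legA mu i j) * Polynomial.X ^ (partAt lam i - j + 1))) *
    (∏ i ∈ Icc 1 mu.length, ∏ j ∈ Icc 1 (partAt mu i - 1),
      (Polynomial.X ^ (partAt mu i - j) - Polynomial.C (Q * t ^ (-legA lam i j - 1)))) *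
    Polynomial.C (∏ i ∈ Icc 1 mu.length, (1 - Q * t ^ (-legA lam i (partAt mu i) - 1))), ?_, ?_⟩
  · intro q hq
    simp only [Polynomial.eval_mul, Polynomial.eval_prod, Polynomial.eval_sub,
      Polynomial.eval_one, Polynomial.eval_pow, Polynomial.eval_X, Polynomial.eval_C]
    unfold nekrasov
    have hA : (∏ i ∈ Icc 1 lam.length, ∏ j ∈ Icc 1 (partAt lam i),
        (1 - (q / t * Q) * q ^ armA lam i j * t ^ (legA mu i j + 1)))
        = ∏ i ∈ Icc 1 lam.length, ∏ j ∈ Icc 1 (partAt lam i),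
        (1 - Q * t ^ legA mu i j * q ^ (partAt lam i - j + 1)) := by
      refine Finset.prod_congr rfl fun i _ => Finset.prod_congr rfl fun j hj => ?_
      simp only [mem_Icc] at hj
      rw [show armA lam i j = (((partAt lam i - j : ℕ)):ℤ) by unfold armA; push_cast; omega]
      exact lam_fac q t Q ht (partAt lam i - j) (legA mu i j)
    have hB : q ^ armSum mu * (∏ i ∈ Icc 1 mu.length, ∏ j ∈ Icc 1 (partAt mu i),
        (1 - (q / t * Q) * q ^ (-armA mu i j - 1) * t ^ (-legA lam i j)))
        = (∏ i ∈ Icc 1 mu.length, ∏ j ∈ Icc 1 (partAt mu i - 1),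
            (q ^ (partAt mu i - j) - Q * t ^ (-legA lam i j - 1))) *
          ∏ i ∈ Icc 1 mu.length, (1 - Q * t ^ (-legA lam i (partAt mu i) - 1)) := by
      unfold armSum
      rw [← Finset.prod_pow_eq_pow_sum, ← Finset.prod_mul_distrib, ← Finset.prod_mul_distrib]
      refine Finset.prod_congr rfl fun i hi => ?_
      have hm : 1 ≤ partAt mu i := hpos i hi
      have hsum : ∑ j ∈ Icc 1 (partAt mu i), (partAt mu i - j)
          = ∑ j ∈ Icc 1 (partAt mu i - 1), (partAt mu i - j) := by
        symm
        refine Finset.sum_subset (Finset.Icc_subset_Icc_right (by omega)) ?_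
        intro x hx hx'
        simp only [mem_Icc] at hx hx'
        omega
      rw [hsum,
        prod_split (partAt mu i) hm
          (fun j => 1 - (q / t * Q) * q ^ (-armA mu i j - 1) * t ^ (-legA lam i j)),
        ← Finset.prod_pow_eq_pow_sum, ← mul_assoc, ← Finset.prod_mul_distrib]
      congr 1
      · refine Finset.prod_congr rfl fun j hj => ?_
        simp only [mem_Icc] at hj
        rw [show -armA mu i j - 1 = -(((partAt mu i - j : ℕ)):ℤ) - 1 by
          unfold armA; push_cast; omega]
        exact mu_fac q t Q hq ht (partAt mu i - j) (legA lam i j)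
      · have h0 := mu_fac q t Q hq ht 0 (legA lam i (partAt mu i))
        simp only [pow_zero, one_mul] at h0
        rw [show -armA mu i (partAt mu i) - 1 = -(((0:ℕ)):ℤ) - 1 by
          unfold armA; push_cast; ring]
        exact h0
    rw [hA, show q ^ armSum mu *
        ((∏ i ∈ Icc 1 lam.length, ∏ j ∈ Icc 1 (partAt lam i),
          (1 - Q * t ^ legA mu i j * q ^ (partAt lam i - j + 1))) *
         (∏ i ∈ Icc 1 mu.length, ∏ j ∈ Icc 1 (partAt mu i),
          (1 - (q / t * Q) * q ^ (-armA mu i j - 1) * t ^ (-legA lam i j))))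
        = (∏ i ∈ Icc 1 lam.length, ∏ j ∈ Icc 1 (partAt lam i),
          (1 - Q * t ^ legA mu i j * q ^ (partAt lam i - j + 1))) *
          (q ^ armSum mu * (∏ i ∈ Icc 1 mu.length, ∏ j ∈ Icc 1 (partAt mu i),
          (1 - (q / t * Q) * q ^ (-armA mu i j - 1) * t ^ (-legA lam i j)))) by ring,
      hB, mul_assoc]
  · simp only [Polynomial.eval_mul, Polynomial.eval_prod, Polynomial.eval_sub,
      Polynomial.eval_one, Polynomial.eval_pow, Polynomial.eval_X, Polynomial.eval_C]
    unfold tildeNek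
    rw [Finset.prod_eq_one fun i _ => Finset.prod_eq_one fun j _ => by simp, one_mul]
    congr 1
    calc (∏ i ∈ Icc 1 mu.length, ∏ j ∈ Icc 1 (partAt mu i - 1),
          ((0:ℂ) ^ (partAt mu i - j) - Q * t ^ (-legA lam i j - 1)))
        = ∏ i ∈ Icc 1 mu.length, ∏ j ∈ Icc 1 (partAt mu i - 1),
          ((-Q * t⁻¹) * t ^ (-legA lam i j)) := by
          refine Finset.prod_congr rfl fun i hi => Finset.prod_congr rfl fun j hj => ?_
          simp only [mem_Icc] at hj
          rw [zero_pow (by omega : partAt mu i - j ≠ 0),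
            show -legA lam i j - 1 = -legA lam i j + (-1) by ring, zpow_add₀ ht, zpow_neg_one]
          ring
      _ = ∏ i ∈ Icc 1 mu.length, ((-Q * t⁻¹) ^ (partAt mu i - 1) *
            t ^ (∑ j ∈ Icc 1 (partAt mu i - 1), -legA lam i j)) := by
          refine Finset.prod_congr rfl fun i _ => ?_
          rw [Finset.prod_mul_distrib, Finset.prod_const, Nat.card_Icc, zpow_sum₀ ht]
          norm_num
      _ = (-Q * t⁻¹) ^ checkCard mu * t ^ (-legSumCheck lam mu) := by
          rw [Finset.prod_mul_distrib, Finset.prod_pow_eq_pow_sum, ← zpow_sum₀ ht]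
          congr 1
          simp [legSumCheck, Finset.sum_neg_distrib]
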